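/- No LTL formula under synchronous (or asynchronous) team semantics is equivalent to the HyperLTL sentence ∃π. p_π: there is no LTL formula φ such that for all teams T, T ⊨ˢ φ iff some trace in T has p at position 0 (and likewise for ⊨ᵃ). -/

import Mathlib

/-- A trace assigns to each time point a set of atomic propositions. -/
abbrev Trace (AP : Type) := ℕ → Set AP
/-- A team is a set of traces. -/
abbrev Team (AP : Type) := Set (Trace AP)

/-- The suffix `t[i,∞)` of a trace. -/
def Trace.shift {AP : Type} (t : Trace AP) (i : ℕ) : Trace AP := fun j => t (i + j)

/-- The synchronous suffix `T[i,∞)` of a team. -/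
def Team.shift {AP : Type} (T : Team AP) (i : ℕ) : Team AP := (fun t => t.shift i) '' T

/-- Asynchronous shift: each trace `t` is shifted by its own amount `f t`. -/
def Team.ashift {AP : Type} (T : Team AP) (f : Trace AP → ℕ) : Team AP :=
  (fun t => t.shift (f t)) '' T

/-- LTL formulas in negation normal form. -/
inductive LTL (AP : Type) : Type where
  | atom : AP → LTL AP
  | natom : AP → LTL AP
  | conj : LTL AP → LTL AP → LTL AP
  | disj : LTL AP → LTL AP → LTL AP
  | next : LTL AP → LTL AP
  | fut : LTL AP → LTL AP
  | glob : LTL AP → LTL AP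
  | untl : LTL AP → LTL AP → LTL AP
  | rel : LTL AP → LTL AP → LTL AP

/-- Classical LTL semantics on a single trace. -/
def ltlSat {AP : Type} : LTL AP → Trace AP → Prop
  | .atom p, t => p ∈ t 0
  | .natom p, t => p ∉ t 0
  | .conj φ ψ, t => ltlSat φ t ∧ ltlSat ψ t
  | .disj φ ψ, t => ltlSat φ t ∨ ltlSat ψ t
  | .next φ, t => ltlSat φ (t.shift 1)
  | .fut φ, t => ∃ k, ltlSat φ (t.shift k)
  | .glob φ, t => ∀ k, ltlSat φ (t.shift k)
  | .untl φ ψ, t => ∃ k, ltlSat ψ (t.shift k) ∧ ∀ k' < k, ltlSat φ (t.shift k')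
  | .rel φ ψ, t => ∀ k, ltlSat ψ (t.shift k) ∨ ∃ k' < k, ltlSat φ (t.shift k')

/-- Synchronous team semantics for LTL. -/
def syncSat {AP : Type} : LTL AP → Team AP → Prop
  | .atom p, T => ∀ t ∈ T, p ∈ t 0
  | .natom p, T => ∀ t ∈ T, p ∉ t 0
  | .conj φ ψ, T => syncSat φ T ∧ syncSat ψ T
  | .disj φ ψ, T => ∃ T₁ T₂, T₁ ∪ T₂ = T ∧ syncSat φ T₁ ∧ syncSat ψ T₂
  | .next φ, T => syncSat φ (T.shift 1)
  | .fut φ, T => ∃ k, syncSat φ (T.shift k)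
  | .glob φ, T => ∀ k, syncSat φ (T.shift k)
  | .untl φ ψ, T => ∃ k, syncSat ψ (T.shift k) ∧ ∀ k' < k, syncSat φ (T.shift k')
  | .rel φ ψ, T => ∀ k, syncSat ψ (T.shift k) ∨ ∃ k' < k, syncSat φ (T.shift k')

/-- Asynchronous team semantics for LTL: temporal operators use an
independent time shift `f t` for each trace `t` of the team. -/
def asyncSat {AP : Type} : LTL AP → Team AP → Prop
  | .atom p, T => ∀ t ∈ T, p ∈ t 0
  | .natom p, T => ∀ t ∈ T, p ∉ t 0
  | .conj φ ψ, T => asyncSat φ T ∧ asyncSat ψ T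
  | .disj φ ψ, T => ∃ T₁ T₂, T₁ ∪ T₂ = T ∧ asyncSat φ T₁ ∧ asyncSat ψ T₂
  | .next φ, T => asyncSat φ (T.shift 1)
  | .fut φ, T => ∃ f : Trace AP → ℕ, asyncSat φ (T.ashift f)
  | .glob φ, T => ∀ f : Trace AP → ℕ, asyncSat φ (T.ashift f)
  | .untl φ ψ, T => ∃ f : Trace AP → ℕ, asyncSat ψ (T.ashift f) ∧
      ∀ g : Trace AP → ℕ, (∀ t ∈ T, g t < f t) → asyncSat φ (T.ashift g)
  | .rel φ ψ, T => ∀ f : Trace AP → ℕ, asyncSat ψ (T.ashift f) ∨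
      ∃ g : Trace AP → ℕ, (∀ t ∈ T, g t < f t) ∧ asyncSat φ (T.ashift g)


namespace NoLTL

variable {AP : Type}

/-- The all-empty trace. -/
def tz (AP : Type) : Trace AP := fun _ => ∅
/-- The trace with `{p}` at time 0 and empty elsewhere. -/
def tp (p : AP) : Trace AP := fun n => if n = 0 then {p} else ∅

lemma shift_zero (t : Trace AP) : t.shift 0 = t := by
  funext j; simp [Trace.shift]

lemma tz_shift (i : ℕ) : (tz AP).shift i = tz AP := by
  funext j; simp [Trace.shift, tz]

lemma tp_shift_pos (p : AP) {i : ℕ} (hi : 0 < i) : (tp p).shift i = tz AP := by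
  funext j
  have h : i + j ≠ 0 := by omega
  simp [Trace.shift, tp, tz, h, hi.ne']

lemma team_shift_empty (i : ℕ) : (∅ : Team AP).shift i = ∅ := by
  simp [Team.shift]

lemma team_ashift_empty (f : Trace AP → ℕ) : (∅ : Team AP).ashift f = ∅ := by
  simp [Team.ashift]

lemma team_shift_mono {T T' : Team AP} (h : T' ⊆ T) (i : ℕ) :
    T'.shift i ⊆ T.shift i := Set.image_mono h

lemma team_ashift_zero (T : Team AP) : T.ashift (fun _ => 0) = T := by
  have : (fun t : Trace AP => t.shift 0) = id := by
    funext t; exact shift_zero t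
  simp [Team.ashift, this]

lemma singleton_tz_ashift (f : Trace AP → ℕ) :
    ({tz AP} : Team AP).ashift f = {tz AP} := by
  simp [Team.ashift, tz_shift]

lemma singleton_tz_shift (i : ℕ) :
    ({tz AP} : Team AP).shift i = {tz AP} := by
  simp [Team.shift, tz_shift]

/-- The empty team satisfies every formula, synchronously. -/
lemma syncSat_empty (φ : LTL AP) : syncSat φ (∅ : Team AP) := by
  induction φ with
  | atom p => intro t ht; exact ht.elim
  | natom p => intro t ht; exact ht.elim
  | conj φ ψ ihφ ihψ => exact ⟨ihφ, ihψ⟩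
  | disj φ ψ ihφ ihψ => exact ⟨∅, ∅, by simp, ihφ, ihψ⟩
  | next φ ih => show syncSat φ ((∅ : Team AP).shift 1); rw [team_shift_empty]; exact ih
  | fut φ ih => exact ⟨0, by rw [team_shift_empty]; exact ih⟩
  | glob φ ih => intro k; rw [team_shift_empty]; exact ih
  | untl φ ψ ihφ ihψ =>
      exact ⟨0, by rw [team_shift_empty]; exact ihψ, fun k' hk' => absurd hk' (by omega)⟩
  | rel φ ψ ihφ ihψ => intro k; left; rw [team_shift_empty]; exact ihψ

/-- The empty team satisfies every formula, asynchronously. -/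
lemma asyncSat_empty (φ : LTL AP) : asyncSat φ (∅ : Team AP) := by
  induction φ with
  | atom p => intro t ht; exact ht.elim
  | natom p => intro t ht; exact ht.elim
  | conj φ ψ ihφ ihψ => exact ⟨ihφ, ihψ⟩
  | disj φ ψ ihφ ihψ => exact ⟨∅, ∅, by simp, ihφ, ihψ⟩
  | next φ ih => show asyncSat φ ((∅ : Team AP).shift 1); rw [team_shift_empty]; exact ih
  | fut φ ih => exact ⟨fun _ => 0, by rw [team_ashift_empty]; exact ih⟩
  | glob φ ih => intro f; rw [team_ashift_empty]; exact ih
  | untl φ ψ ihφ ihψ =>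
      refine ⟨fun _ => 0, by rw [team_ashift_empty]; exact ihψ, ?_⟩
      intro g hg; rw [team_ashift_empty]; exact ihφ
  | rel φ ψ ihφ ihψ => intro f; left; rw [team_ashift_empty]; exact ihψ

/-- Synchronous team semantics is downward closed. -/
lemma syncSat_mono (φ : LTL AP) :
    ∀ T T' : Team AP, T' ⊆ T → syncSat φ T → syncSat φ T' := by
  induction φ with
  | atom p => intro T T' hsub h t ht; exact h t (hsub ht)
  | natom p => intro T T' hsub h t ht; exact h t (hsub ht)
  | conj φ ψ ihφ ihψ =>
      rintro T T' hsub ⟨h1, h2⟩; exact ⟨ihφ _ _ hsub h1, ihψ _ _ hsub h2⟩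
  | disj φ ψ ihφ ihψ =>
      rintro T T' hsub ⟨T₁, T₂, hu, h1, h2⟩
      refine ⟨T₁ ∩ T', T₂ ∩ T', ?_, ihφ _ _ Set.inter_subset_left h1,
        ihψ _ _ Set.inter_subset_left h2⟩
      rw [← Set.union_inter_distrib_right, hu]
      exact Set.inter_eq_self_of_subset_right hsub
  | next φ ih =>
      intro T T' hsub h; exact ih _ _ (team_shift_mono hsub 1) h
  | fut φ ih =>
      rintro T T' hsub ⟨k, h⟩; exact ⟨k, ih _ _ (team_shift_mono hsub k) h⟩
  | glob φ ih =>
      intro T T' hsub h k; exact ih _ _ (team_shift_mono hsub k) (h k)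
  | untl φ ψ ihφ ihψ =>
      rintro T T' hsub ⟨k, hψ, hφ⟩
      exact ⟨k, ihψ _ _ (team_shift_mono hsub k) hψ,
        fun k' hk' => ihφ _ _ (team_shift_mono hsub k') (hφ k' hk')⟩
  | rel φ ψ ihφ ihψ =>
      intro T T' hsub h k
      rcases h k with hψ | ⟨k', hk', hφ⟩
      · exact Or.inl (ihψ _ _ (team_shift_mono hsub k) hψ)
      · exact Or.inr ⟨k', hk', ihφ _ _ (team_shift_mono hsub k') hφ⟩

/-- Key facts about the pair team. -/
lemma pair_ashift_subset (p : AP) {S : Team AP}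
    (hS : S ⊆ {tz AP, tp p}) (f : Trace AP → ℕ) :
    S.ashift f ⊆ {tz AP, tp p} := by
  rintro x ⟨t, ht, rfl⟩
  dsimp only
  rcases hS ht with rfl | rfl
  · rw [tz_shift]; exact Or.inl rfl
  · rcases Nat.eq_zero_or_pos (f (tp p)) with h0 | hpos
    · rw [h0, shift_zero]; exact Or.inr rfl
    · rw [tp_shift_pos p hpos]; exact Or.inl rfl

lemma tz_mem_ashift {S : Team AP} (h : tz AP ∈ S) (f : Trace AP → ℕ) :
    tz AP ∈ S.ashift f := ⟨tz AP, h, tz_shift _⟩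

lemma pair_shift_one (p : AP) {S : Team AP}
    (hS : S ⊆ {tz AP, tp p}) (h0 : tz AP ∈ S) :
    S.shift 1 = {tz AP} := by
  apply Set.eq_singleton_iff_unique_mem.mpr
  constructor
  · exact ⟨tz AP, h0, tz_shift 1⟩
  · rintro x ⟨t, ht, rfl⟩
    rcases hS ht with rfl | rfl
    · exact tz_shift 1
    · exact tp_shift_pos p Nat.one_pos

/-- Asynchronous downward closure, specialized to the two traces we need. -/
lemma asyncSat_down (p : AP) (φ : LTL AP) :
    ∀ S : Team AP, S ⊆ {tz AP, tp p} → tz AP ∈ S → asyncSat φ S →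
      asyncSat φ ({tz AP} : Team AP) := by
  induction φ with
  | atom q =>
      intro S hS h0 h t ht
      rw [Set.mem_singleton_iff] at ht; subst ht; exact h _ h0
  | natom q =>
      intro S hS h0 h t ht
      rw [Set.mem_singleton_iff] at ht; subst ht; exact h _ h0
  | conj φ ψ ihφ ihψ =>
      rintro S hS h0 ⟨h1, h2⟩
      exact ⟨ihφ S hS h0 h1, ihψ S hS h0 h2⟩
  | disj φ ψ ihφ ihψ =>
      rintro S hS h0 ⟨T₁, T₂, hu, h1, h2⟩
      have hmem : tz AP ∈ T₁ ∨ tz AP ∈ T₂ := by rw [← hu] at h0; exact h0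
      have hT₁ : T₁ ⊆ {tz AP, tp p} := (hu ▸ Set.subset_union_left).trans hS
      have hT₂ : T₂ ⊆ {tz AP, tp p} := (hu ▸ Set.subset_union_right).trans hS
      rcases hmem with hm | hm
      · exact ⟨{tz AP}, ∅, by simp, ihφ T₁ hT₁ hm h1, asyncSat_empty ψ⟩
      · exact ⟨∅, {tz AP}, by simp, asyncSat_empty φ, ihψ T₂ hT₂ hm h2⟩
  | next φ ih =>
      intro S hS h0 h
      show asyncSat φ (({tz AP} : Team AP).shift 1)
      rw [singleton_tz_shift]
      have h' : asyncSat φ (S.shift 1) := h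
      rw [pair_shift_one p hS h0] at h'
      exact h'
  | fut φ ih =>
      rintro S hS h0 ⟨f, h⟩
      refine ⟨fun _ => 0, ?_⟩
      rw [singleton_tz_ashift]
      exact ih _ (pair_ashift_subset p hS f) (tz_mem_ashift h0 f) h
  | glob φ ih =>
      intro S hS h0 h f
      rw [singleton_tz_ashift]
      have := h (fun _ => 0)
      rw [team_ashift_zero] at this
      exact ih S hS h0 this
  | untl φ ψ ihφ ihψ =>
      rintro S hS h0 ⟨f, hψ, _⟩
      refine ⟨fun _ => 0, ?_, ?_⟩
      · rw [singleton_tz_ashift]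
        exact ihψ _ (pair_ashift_subset p hS f) (tz_mem_ashift h0 f) hψ
      · intro g hg
        exact absurd (hg (tz AP) rfl) (Nat.not_lt_zero _)
  | rel φ ψ ihφ ihψ =>
      intro S hS h0 h f
      rcases h f with hψ | ⟨g, hg, hφ⟩
      · left; rw [singleton_tz_ashift]
        exact ihψ _ (pair_ashift_subset p hS f) (tz_mem_ashift h0 f) hψ
      · right
        refine ⟨g, ?_, ?_⟩
        · intro t ht; rw [Set.mem_singleton_iff] at ht; subst ht; exact hg _ h0
        · rw [singleton_tz_ashift]
          exact ihφ _ (pair_ashift_subset p hS g) (tz_mem_ashift h0 g) hφ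

end NoLTL

open NoLTL in
/-- no LTL formula under synchronous or asynchronous team
semantics is equivalent to the HyperLTL sentence `∃π. p_π`. -/
theorem no_ltl_equivalent_to_exists_p {AP : Type} (p : AP) :
    (¬ ∃ φ : LTL AP, ∀ T : Team AP, syncSat φ T ↔ ∃ t ∈ T, p ∈ t 0) ∧
    (¬ ∃ φ : LTL AP, ∀ T : Team AP, asyncSat φ T ↔ ∃ t ∈ T, p ∈ t 0) := by
  constructor
  · rintro ⟨φ, hφ⟩
    have hT : syncSat φ ({tz AP, tp p} : Team AP) :=
      (hφ _).mpr ⟨tp p, Or.inr rfl, by simp [tp]⟩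
    have h0 : syncSat φ ({tz AP} : Team AP) :=
      syncSat_mono φ _ _ (Set.singleton_subset_iff.mpr (Or.inl rfl)) hT
    obtain ⟨t, ht, hp⟩ := (hφ _).mp h0
    rw [Set.mem_singleton_iff] at ht; subst ht
    exact hp
  · rintro ⟨φ, hφ⟩
    have hT : asyncSat φ ({tz AP, tp p} : Team AP) :=
      (hφ _).mpr ⟨tp p, Or.inr rfl, by simp [tp]⟩
    have h0 : asyncSat φ ({tz AP} : Team AP) :=
      asyncSat_down p φ _ (le_refl _) (Or.inl rfl) hT
    obtain ⟨t, ht, hp⟩ := (hφ _).mp h0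
    rw [Set.mem_singleton_iff] at ht; subst ht
    exact hp
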